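/- arXiv:2208.03265 — 2 statements merged into one kernel-verified Lean document; each statement's English description precedes it below -/
import Mathlib

section
/- Two-sided delay bound for the one-sided threshold test: Assume supp q ⊆ supp p, D := D(q‖p) > 0, and h ≥ 0. Then under P_q (all X_i i.i.d. with law q), T_1 < ∞ almost surely and h/D ≤ E[T_1] ≤ (h + C)/D, where C := max_{x ∈ supp q} log(q(x)/p(x)). -/
open MeasureTheory ProbabilityTheory Real Filter
open scoped ENNReal NNReal

noncomputable section

namespace QCPD

variable {X : Type*}

/-- The measure on `X` induced by a probability mass function `p`. -/
def pmfMeasure [Fintype X] [MeasurableSpace X] (p : X → ℝ) : Measure X :=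
  ∑ x : X, ENNReal.ofReal (p x) • Measure.dirac x

/-- `p` is a probability mass function on the finite type `X`. -/
def IsPMF [Fintype X] (p : X → ℝ) : Prop := (∀ x, 0 ≤ p x) ∧ ∑ x, p x = 1

/-- Under `P`, the coordinates of `Ω = ℕ → X` are independent and the `i`-th
coordinate (representing `X_{i+1}`) has law given by the pmf `r i`.  For i.i.d.
pmfs this characterizes the infinite product measure. -/
def HasLaw [Fintype X] [MeasurableSpace X] (P : Measure (ℕ → X)) (r : ℕ → X → ℝ) : Prop :=
  iIndepFun (fun i (ω : ℕ → X) => ω i) P ∧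
    ∀ i, P.map (fun ω => ω i) = pmfMeasure (r i)

/-- The log-likelihood ratio `log (q x / p x)`, valued in the extended reals,
with the conventions `log 0 = −∞` (and `log ∞ = ∞`). -/
def llr (p q : X → ℝ) (x : X) : EReal :=
  ENNReal.log (ENNReal.ofReal (q x) / ENNReal.ofReal (p x))

/-- `S_n = ∑_{i=1}^n Z_i` where `Z_i = log (q (X_i) / p (X_i))`; the `i`-th
coordinate of `ω` represents `X_{i+1}`. -/
def llrSum (p q : X → ℝ) (n : ℕ) (ω : ℕ → X) : EReal :=
  ∑ i ∈ Finset.range n, llr p q (ω i)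

/-- `T₁ = inf {n ≥ 1 : S_n ≥ h}`, with value `∞` if no such `n` exists. -/
def T1 (p q : X → ℝ) (h : ℝ) (ω : ℕ → X) : ℕ∞ :=
  sInf ((↑) '' {n : ℕ | 1 ≤ n ∧ (h : EReal) ≤ llrSum p q n ω})

/-- Kullback–Leibler divergence `D(q‖p) = ∑_{x ∈ supp q} q x · log (q x / p x)`. -/
def KL [Fintype X] (q p : X → ℝ) : ℝ :=
  ∑ x ∈ Finset.univ.filter (fun x => 0 < q x), q x * Real.log (q x / p x)

/- auxiliary lemmas -/

lemma ereal_coe_sum {ι : Type*} (s : Finset ι) (f : ι → ℝ) :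
    ((∑ i ∈ s, f i : ℝ) : EReal) = ∑ i ∈ s, (f i : EReal) := by
  classical
  induction s using Finset.induction with
  | empty => simp
  | @insert a s' hx ih => simp [Finset.sum_insert hx, ih]

lemma llr_eq_of_pos (p q : X → ℝ) {x : X} (hqx : 0 < q x) (hpx : 0 < p x) :
    llr p q x = (Real.log (q x / p x) : EReal) := by
  rw [llr, ← ENNReal.ofReal_div_of_pos hpx, ENNReal.log_ofReal_of_pos (div_pos hqx hpx)]

lemma llrSum_congr (p q : X → ℝ) (n : ℕ) {ω ω' : ℕ → X}
    (hc : ∀ j < n, ω j = ω' j) : llrSum p q n ω = llrSum p q n ω' := by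
  unfold llrSum
  exact Finset.sum_congr rfl fun j hj => by rw [hc j (Finset.mem_range.mp hj)]

lemma lt_T1_iff (p q : X → ℝ) (h : ℝ) (ω : ℕ → X) (i : ℕ) :
    ((i : ℕ∞) < T1 p q h ω) ↔
      ∀ k, 1 ≤ k → k ≤ i → ¬ ((h : EReal) ≤ llrSum p q k ω) := by
  constructor
  · intro hlt k hk1 hki hk
    have : T1 p q h ω ≤ (k : ℕ∞) := sInf_le ⟨k, ⟨hk1, hk⟩, rfl⟩
    have : (i : ℕ∞) < (k : ℕ∞) := lt_of_lt_of_le hlt this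
    have hik : i < k := Nat.cast_lt.mp this
    omega
  · intro H
    have h1 : ((i+1 : ℕ) : ℕ∞) ≤ T1 p q h ω := by
      apply le_sInf
      rintro a ⟨k, ⟨hk1, hk⟩, rfl⟩
      by_contra hcon
      push_neg at hcon
      have hki : k ≤ i := by
        have := Nat.cast_lt.mp hcon
        omega
      exact H k hk1 hki hk
    calc (i : ℕ∞) < ((i+1 : ℕ) : ℕ∞) := by exact_mod_cast Nat.lt_succ_self i
    _ ≤ _ := h1

lemma T1_pos (p q : X → ℝ) (h : ℝ) (ω : ℕ → X) : (0 : ℕ∞) < T1 p q h ω := by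
  have := (lt_T1_iff p q h ω 0).mpr (fun k hk1 hk0 _ => by omega)
  simpa using this

lemma T1_attained (p q : X → ℝ) (h : ℝ) (ω : ℕ → X) {m : ℕ}
    (hT : T1 p q h ω = (m : ℕ∞)) : 1 ≤ m ∧ (h : EReal) ≤ llrSum p q m ω := by
  have hnot : ¬ ((m : ℕ∞) < T1 p q h ω) := by rw [hT]; exact lt_irrefl _
  rw [lt_T1_iff] at hnot
  push_neg at hnot
  obtain ⟨k, hk1, hkm, hk⟩ := hnot
  have : T1 p q h ω ≤ (k : ℕ∞) := sInf_le ⟨k, ⟨hk1, hk⟩, rfl⟩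
  rw [hT] at this
  have : m ≤ k := Nat.cast_le.mp this
  have hkm' : k = m := le_antisymm hkm this
  subst hkm'
  exact ⟨hk1, hk⟩


lemma pmfMeasure_isProb [Fintype X] [MeasurableSpace X] {r : X → ℝ} (hr : IsPMF r) :
    IsProbabilityMeasure (pmfMeasure r) := by
  constructor
  rw [pmfMeasure]
  rw [Measure.finset_sum_apply]
  simp only [Measure.smul_apply, smul_eq_mul]
  have : ∀ x : X, ENNReal.ofReal (r x) * Measure.dirac x Set.univ = ENNReal.ofReal (r x) := by
    intro x; simp
  rw [Finset.sum_congr rfl (fun x _ => this x), ← ENNReal.ofReal_sum_of_nonneg (fun x _ => hr.1 x), hr.2]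
  simp

lemma integral_pmfMeasure [Fintype X] [MeasurableSpace X] [MeasurableSingletonClass X]
    {r : X → ℝ} (hr : ∀ x, 0 ≤ r x) (f : X → ℝ) :
    ∫ x, f x ∂(pmfMeasure r) = ∑ x, r x * f x := by
  have hfin : ∀ x : X, IsFiniteMeasure (ENNReal.ofReal (r x) • Measure.dirac x) := by
    intro x
    constructor
    simp [Measure.smul_apply, lt_top_iff_ne_top]
  rw [pmfMeasure, integral_finset_sum_measure (fun x _ => @Integrable.of_finite _ _ _ _ _ _ _ (hfin x) _)]
  refine Finset.sum_congr rfl fun x _ => ?_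
  rw [integral_smul_measure, integral_dirac, ENNReal.toReal_ofReal (hr x), smul_eq_mul]

lemma pmfMeasure_apply_nonpos [Fintype X] [MeasurableSpace X] [MeasurableSingletonClass X]
    {r : X → ℝ} : pmfMeasure r {x | ¬ 0 < r x} = 0 := by
  rw [pmfMeasure, Measure.finset_sum_apply]
  refine Finset.sum_eq_zero fun x _ => ?_
  by_cases hx : 0 < r x
  · have : Measure.dirac x {x | ¬ 0 < r x} = 0 := by
      rw [Measure.dirac_apply' _ (by measurability)]
      simp [hx]
    rw [Measure.smul_apply, this]; simp
  · have : ENNReal.ofReal (r x) = 0 := by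
      simp [ENNReal.ofReal_eq_zero.mpr (not_lt.mp hx)]
    simp [this]


open scoped Topology

lemma enat_exists_coe {x : ℕ∞} (hx : x ≠ ⊤) : ∃ m : ℕ, x = (m : ℕ∞) := by
  obtain ⟨m, hm⟩ := WithTop.ne_top_iff_exists.mp hx
  exact ⟨m, hm.symm⟩

lemma T1_lt_congr (p q : X → ℝ) (h : ℝ) (i : ℕ) {ω ω' : ℕ → X}
    (hc : ∀ j < i, ω j = ω' j) :
    ((i : ℕ∞) < T1 p q h ω ↔ (i : ℕ∞) < T1 p q h ω') := by
  rw [lt_T1_iff, lt_T1_iff]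
  constructor <;> intro H k hk1 hki hle <;> apply H k hk1 hki
  · rwa [llrSum_congr p q k (fun j hj => hc j (lt_of_lt_of_le hj hki))]
  · rwa [← llrSum_congr p q k (fun j hj => hc j (lt_of_lt_of_le hj hki))]


/-- **Two-sided delay bound for the one-sided threshold test.** If
`supp q ⊆ supp p`, `D := D(q‖p) > 0`, and `h ≥ 0`, then under the i.i.d.-`q`
measure, `T₁ < ∞` a.s. and `h/D ≤ E[T₁] ≤ (h + C)/D`, where
`C = max_{x ∈ supp q} log (q x / p x)`. -/
theorem delay_two_sided_bound
    [Fintype X] [Nonempty X] [MeasurableSpace X] [DiscreteMeasurableSpace X]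
    (p q : X → ℝ) (hp : IsPMF p) (hq : IsPMF q)
    (hsupp : ∀ x, 0 < q x → 0 < p x)
    (D : ℝ) (hD : D = KL q p) (hDpos : 0 < D)
    (h : ℝ) (hh : 0 ≤ h)
    (C : ℝ) (hC : C = sSup {y : ℝ | ∃ x, 0 < q x ∧ y = Real.log (q x / p x)})
    (P : Measure (ℕ → X)) [IsProbabilityMeasure P] (hP : HasLaw P (fun _ => q)) :
    (∀ᵐ ω ∂P, T1 p q h ω ≠ ⊤) ∧
    ENNReal.ofReal (h / D) ≤ ∫⁻ ω, (T1 p q h ω : ℝ≥0∞) ∂P ∧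
    ∫⁻ ω, (T1 p q h ω : ℝ≥0∞) ∂P ≤ ENNReal.ofReal ((h + C) / D) := by
  classical
  obtain ⟨hq0, hq1⟩ := hq
  obtain ⟨hp0, hp1⟩ := hp
  set Z : ℕ → (ℕ → X) → ℝ := fun i ω => Real.log (q (ω i) / p (ω i)) with hZdef
  set B : ℕ → Set (ℕ → X) := fun i => {ω | (i : ℕ∞) < T1 p q h ω} with hBdef
  set G : Set (ℕ → X) := {ω | ∀ i, 0 < q (ω i)} with hGdef
  have hcoord : ∀ i, Measurable (fun ω : ℕ → X => ω i) := fun i => measurable_pi_apply i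
  have hZmeas : ∀ i, Measurable (Z i) := fun i =>
    (Measurable.of_discrete (f := fun x => Real.log (q x / p x))).comp (hcoord i)
  -- the support event
  have hGae : ∀ᵐ ω ∂P, ω ∈ G := by
    rw [ae_iff]
    have hsub : {ω : ℕ → X | ¬ ω ∈ G} ⊆
        ⋃ i, (fun ω : ℕ → X => ω i) ⁻¹' {x | ¬ 0 < q x} := by
      intro ω hω
      simp only [hGdef, Set.mem_setOf_eq, not_forall] at hω
      obtain ⟨i, hi⟩ := hω
      exact Set.mem_iUnion.mpr ⟨i, hi⟩
    refine measure_mono_null hsub (measure_iUnion_null fun i => ?_)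
    rw [← Measure.map_apply (hcoord i) (MeasurableSet.of_discrete (s := {x : X | ¬ 0 < q x})),
      hP.2 i]
    exact pmfMeasure_apply_nonpos
  -- measurability of B i
  have hBmeas : ∀ i, MeasurableSet (B i) := by
    intro i
    have hBeq : B i = (fun ω (j : Fin i) => ω (j : ℕ)) ⁻¹'
        {g : Fin i → X | (i : ℕ∞) < T1 p q h
          (fun k => if hk : k < i then g ⟨k, hk⟩ else Classical.arbitrary X)} := by
      ext ω
      simp only [hBdef, Set.mem_setOf_eq, Set.mem_preimage]
      exact T1_lt_congr p q h i (fun j hj => by simp [hj])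
    rw [hBeq]
    exact (measurable_pi_lambda (fun (ω : ℕ → X) (j : Fin i) => ω (j : ℕ))
      (fun j => measurable_pi_apply (j : ℕ))) MeasurableSet.of_discrete
  -- independence of Z i and the indicator of B i
  have hind : ∀ i, IndepFun (Z i) (fun ω => Set.indicator (B i) (fun _ => (1:ℝ)) ω) P := by
    intro i
    have hdisj : Disjoint ({i} : Finset ℕ) (Finset.range i) := by
      simp [Finset.disjoint_left]
    have hbase := hP.1.indepFun_finset {i} (Finset.range i) hdisj (fun j => hcoord j)
    have him : (i : ℕ) ∈ ({i} : Finset ℕ) := Finset.mem_singleton_self i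
    set V : Set ((j : (Finset.range i : Finset ℕ)) → X) :=
      {g | (i : ℕ∞) < T1 p q h
        (fun k => if hk : k ∈ Finset.range i then g ⟨k, hk⟩ else Classical.arbitrary X)} with hVdef
    have hφ : Measurable (fun u : ((j : ({i} : Finset ℕ)) → X) =>
        Real.log (q (u ⟨i, him⟩) / p (u ⟨i, him⟩))) := Measurable.of_discrete
    have hψ : Measurable (fun u : ((j : (Finset.range i : Finset ℕ)) → X) =>
        Set.indicator V (fun _ => (1:ℝ)) u) := Measurable.of_discrete
    have hcomp := hbase.comp hφ hψ
    convert hcomp using 1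
    · rfl
    funext ω
    simp only [Function.comp_apply]
    have hmem : (ω ∈ B i) ↔
        ((fun (j : (Finset.range i : Finset ℕ)) => ω (j : ℕ)) ∈ V) := by
      simp only [hBdef, Set.mem_setOf_eq, hVdef]
      exact T1_lt_congr p q h i (fun j hj => by
        simp [Finset.mem_range, hj])
    by_cases hmem' : ω ∈ B i
    · rw [Set.indicator_of_mem hmem', Set.indicator_of_mem (hmem.mp hmem')]
    · rw [Set.indicator_of_notMem hmem',
        Set.indicator_of_notMem (fun hcon => hmem' (hmem.mpr hcon))]
  -- the bound K
  obtain ⟨x0⟩ := (inferInstance : Nonempty X)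
  set K : ℝ := Finset.univ.sup' (Finset.univ_nonempty) (fun x => |Real.log (q x / p x)|)
    with hKdef
  have hK : ∀ x : X, |Real.log (q x / p x)| ≤ K := fun x => by
    rw [hKdef]; exact Finset.le_sup' (fun x : X => |Real.log (q x / p x)|) (Finset.mem_univ x)
  have hK0 : 0 ≤ K := le_trans (abs_nonneg _) (hK x0)
  have hZint : ∀ i, Integrable (Z i) P := fun i =>
    (integrable_const K).mono' ((hZmeas i).aestronglyMeasurable)
      (ae_of_all _ fun ω => by simpa [Real.norm_eq_abs] using hK (ω i))
  -- mean of Z i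
  have hEZ : ∀ i, ∫ ω, Z i ω ∂P = D := by
    intro i
    have h1 : ∫ ω, Z i ω ∂P
        = ∫ x, Real.log (q x / p x) ∂(P.map (fun ω : ℕ → X => ω i)) := by
      rw [integral_map (hcoord i).aemeasurable
        (Measurable.of_discrete (f := fun x => Real.log (q x / p x))).aestronglyMeasurable]
    rw [h1, hP.2 i, integral_pmfMeasure hq0, hD, KL]
    refine (Finset.sum_filter_of_ne fun x _ hne => ?_).symm
    by_contra hcon
    have hq0' : q x = 0 := le_antisymm (not_lt.mp hcon) (hq0 x)
    exact hne (by rw [hq0', zero_mul])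
  -- per-step Wald identity
  have hint_ind : ∀ i, Integrable ((B i).indicator (Z i)) P :=
    fun i => (hZint i).indicator (hBmeas i)
  have key_i : ∀ i, ∫ ω, (B i).indicator (Z i) ω ∂P = D * (P (B i)).toReal := by
    intro i
    have heq : (B i).indicator (Z i)
        = (Z i) * (fun ω => Set.indicator (B i) (fun _ => (1:ℝ)) ω) := by
      funext ω
      by_cases hm : ω ∈ B i
      · simp [Set.indicator_of_mem hm]
      · simp [Set.indicator_of_notMem hm]
    have hmul := (hind i).integral_mul_eq_mul_integral (hZint i).aestronglyMeasurable
      ((integrable_const (1:ℝ)).indicator (hBmeas i)).aestronglyMeasurable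
    rw [heq, hmul, hEZ i, integral_indicator_const (1:ℝ) (hBmeas i), smul_eq_mul, mul_one,
      measureReal_def]
  -- the partial sums F n
  set Fn : ℕ → (ℕ → X) → ℝ := fun n ω => ∑ i ∈ Finset.range n, (B i).indicator (Z i) ω
    with hFndef
  have hFint : ∀ n, Integrable (Fn n) P := fun n =>
    integrable_finset_sum _ (fun i _ => hint_ind i)
  have hIF : ∀ n, ∫ ω, Fn n ω ∂P = D * ∑ i ∈ Finset.range n, (P (B i)).toReal := by
    intro n
    rw [hFndef]
    rw [integral_finset_sum _ (fun i _ => hint_ind i),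
      Finset.sum_congr rfl (fun i _ => key_i i), Finset.mul_sum]
  -- pointwise filter representation
  have hFn_filter : ∀ (n : ℕ) ω, Fn n ω
      = ∑ i ∈ (Finset.range n).filter (fun i => ω ∈ B i), Z i ω := by
    intro n ω
    rw [hFndef]
    exact Finset.sum_indicator_eq_sum_filter _ _ _ _
  have hfilter_coe : ∀ (n m : ℕ) ω, T1 p q h ω = (m : ℕ∞) →
      (Finset.range n).filter (fun i => ω ∈ B i) = Finset.range (min m n) := by
    intro n m ω hT
    ext i
    simp only [Finset.mem_filter, Finset.mem_range, hBdef, Set.mem_setOf_eq, hT,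
      Nat.cast_lt, lt_min_iff]
    tauto
  have hfilter_top : ∀ (n : ℕ) ω, T1 p q h ω = ⊤ →
      (Finset.range n).filter (fun i => ω ∈ B i) = Finset.range n := by
    intro n ω hT
    refine Finset.filter_true_of_mem fun i _ => ?_
    simp only [hBdef, Set.mem_setOf_eq, hT]
    exact WithTop.coe_lt_top _
  -- min T1 n as an ℝ≥0∞-valued function
  set Tn : ℕ → (ℕ → X) → ℝ≥0∞ :=
    fun n ω => ENat.toENNReal (min (T1 p q h ω) (n : ℕ∞)) with hTndef
  have hmin_pt : ∀ (n : ℕ) ω, Tn n ω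
      = ∑ i ∈ Finset.range n, (B i).indicator (fun _ => (1:ℝ≥0∞)) ω := by
    intro n ω
    have hrw : ∑ i ∈ Finset.range n, (B i).indicator (fun _ => (1:ℝ≥0∞)) ω
        = ∑ i ∈ (Finset.range n).filter (fun i => ω ∈ B i), (1:ℝ≥0∞) :=
      Finset.sum_indicator_eq_sum_filter _ _ _ _
    simp only [hTndef]
    rw [hrw]
    rcases eq_or_ne (T1 p q h ω) ⊤ with hT | hT
    · rw [hfilter_top n ω hT, hT]
      simp
    · obtain ⟨m, hm⟩ := enat_exists_coe hT
      rw [hfilter_coe n m ω hm, hm]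
      have hs : (∑ _i ∈ Finset.range (min m n), (1:ℝ≥0∞)) = ((min m n : ℕ) : ℝ≥0∞) := by
        simp
      rw [hs]
      rcases le_total m n with hmn | hnm
      · rw [min_eq_left hmn, min_eq_left (by exact_mod_cast hmn : (m:ℕ∞) ≤ (n:ℕ∞)),
          ENat.toENNReal_coe]
      · rw [min_eq_right hnm, min_eq_right (by exact_mod_cast hnm : (n:ℕ∞) ≤ (m:ℕ∞)),
          ENat.toENNReal_coe]
  have hminT : ∀ (n : ℕ), ∫⁻ ω, Tn n ω ∂P = ∑ i ∈ Finset.range n, P (B i) := by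
    intro n
    rw [lintegral_congr (hmin_pt n),
      lintegral_finset_sum _ (fun i _ => measurable_const.indicator (hBmeas i))]
    exact Finset.sum_congr rfl fun i _ => by
      rw [lintegral_indicator_const (hBmeas i), one_mul]
  -- real-sum representation of llrSum on G
  have hSum : ∀ ω ∈ G, ∀ (k : ℕ), llrSum p q k ω
      = ((∑ i ∈ Finset.range k, Z i ω : ℝ) : EReal) := by
    intro ω hω k
    rw [ereal_coe_sum, llrSum]
    exact Finset.sum_congr rfl fun i _ => llr_eq_of_pos p q (hω i) (hsupp _ (hω i))
  have hSlt : ∀ ω ∈ G, ∀ (k : ℕ), 1 ≤ k → ((k : ℕ∞) < T1 p q h ω) →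
      ∑ i ∈ Finset.range k, Z i ω < h := by
    intro ω hω k hk1 hlt
    have hval := (lt_T1_iff p q h ω k).mp hlt k hk1 le_rfl
    rw [hSum ω hω k] at hval
    exact_mod_cast not_le.mp hval
  -- properties of C
  have hCfin : {y : ℝ | ∃ x, 0 < q x ∧ y = Real.log (q x / p x)}.Finite := by
    apply Set.Finite.subset (Set.finite_range (fun x : X => Real.log (q x / p x)))
    rintro y ⟨x, _, rfl⟩
    exact ⟨x, rfl⟩
  have hCb : ∀ x, 0 < q x → Real.log (q x / p x) ≤ C := by
    intro x hx
    rw [hC]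
    exact le_csSup hCfin.bddAbove ⟨x, hx, rfl⟩
  have hC0 : 0 ≤ C := by
    obtain ⟨x, hqx, hpq⟩ : ∃ x, 0 < q x ∧ p x ≤ q x := by
      by_contra hcon
      push_neg at hcon
      have hne : (Finset.univ.filter (fun x : X => 0 < q x)).Nonempty := by
        obtain ⟨x, _, hx⟩ := Finset.exists_ne_zero_of_sum_ne_zero (by rw [hq1]; norm_num :
          ∑ x : X, q x ≠ 0)
        exact ⟨x, Finset.mem_filter.mpr ⟨Finset.mem_univ x, (hq0 x).lt_of_ne (Ne.symm hx)⟩⟩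
      have hlt : ∑ x ∈ Finset.univ.filter (fun x : X => 0 < q x), q x
          < ∑ x ∈ Finset.univ.filter (fun x : X => 0 < q x), p x :=
        Finset.sum_lt_sum_of_nonempty hne fun x hx =>
          hcon x (Finset.mem_filter.mp hx).2
      have hle : ∑ x ∈ Finset.univ.filter (fun x : X => 0 < q x), p x ≤ ∑ x : X, p x :=
        Finset.sum_le_sum_of_subset_of_nonneg (Finset.filter_subset _ _)
          (fun x _ _ => hp0 x)
      have hqe : ∑ x ∈ Finset.univ.filter (fun x : X => 0 < q x), q x = 1 := by
        rw [Finset.sum_filter_of_ne fun x _ hne' => (hq0 x).lt_of_ne (Ne.symm hne'), hq1]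
      rw [hqe] at hlt
      rw [hp1] at hle
      linarith
    have hlog : 0 ≤ Real.log (q x / p x) :=
      Real.log_nonneg ((one_le_div (hsupp x hqx)).mpr hpq)
    exact hlog.trans (hCb x hqx)
  -- pointwise upper bound on Fn
  have hFle : ∀ (n : ℕ), ∀ ω ∈ G, Fn n ω ≤ h + C := by
    intro n ω hω
    rw [hFn_filter]
    rcases eq_or_ne (T1 p q h ω) ⊤ with hT | hT
    · rw [hfilter_top n ω hT]
      rcases Nat.eq_zero_or_pos n with hn | hn
      · subst hn; simpa using add_nonneg hh hC0
      · have hlt := hSlt ω hω n hn (by rw [hT]; exact WithTop.coe_lt_top _)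
        linarith
    · obtain ⟨m, hm⟩ := enat_exists_coe hT
      rw [hfilter_coe n m ω hm]
      obtain ⟨hm1, _⟩ := T1_attained p q h ω hm
      rcases le_or_gt m n with hmn | hnm
      · rw [min_eq_left hmn]
        have hm' : m = (m - 1) + 1 := by omega
        rw [hm', Finset.sum_range_succ]
        have hZle : Z (m - 1) ω ≤ C := hCb _ (hω (m - 1))
        have hSle : ∑ i ∈ Finset.range (m - 1), Z i ω ≤ h := by
          rcases Nat.eq_zero_or_pos (m - 1) with h0 | h0
          · rw [h0]; simpa using hh
          · exact (hSlt ω hω (m - 1) h0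
              (by rw [hm]; exact_mod_cast (by omega : m - 1 < m))).le
        linarith
      · rw [min_eq_right hnm.le]
        rcases Nat.eq_zero_or_pos n with h0 | h0
        · subst h0; simpa using add_nonneg hh hC0
        · have hlt := hSlt ω hω n h0 (by rw [hm]; exact_mod_cast hnm)
          linarith
  -- e_n bound
  have hEn_le : ∀ (n : ℕ), ∑ i ∈ Finset.range n, (P (B i)).toReal ≤ (h + C) / D := by
    intro n
    have h1 : ∫ ω, Fn n ω ∂P ≤ h + C := by
      have h2 := integral_mono_ae (hFint n) (integrable_const (h + C))
        (hGae.mono fun ω hω => hFle n ω hω)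
      simpa using h2
    rw [hIF n] at h1
    rw [le_div_iff₀ hDpos, mul_comm]
    exact h1
  -- lintegral of T1 as a sup
  have hT1pt : ∀ ω, (T1 p q h ω : ℝ≥0∞) = ⨆ n : ℕ, Tn n ω := by
    intro ω
    simp only [hTndef]
    rcases eq_or_ne (T1 p q h ω) ⊤ with hT | hT
    · rw [hT]
      have hmin : ∀ n : ℕ, min (⊤ : ℕ∞) (n : ℕ∞) = (n : ℕ∞) := fun n => min_eq_right le_top
      simp only [hmin, ENat.toENNReal_coe, ENat.toENNReal_top]
      exact ENNReal.iSup_natCast.symm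
    · obtain ⟨m, hm⟩ := enat_exists_coe hT
      rw [hm]
      refine le_antisymm (le_iSup_of_le m (by simp)) ?_
      exact iSup_le fun n => ENat.toENNReal_le.mpr (min_le_left _ _)
  have hmeas_minT : ∀ (n : ℕ), Measurable (Tn n) := by
    intro n
    have heq : Tn n = fun ω => ∑ i ∈ Finset.range n, (B i).indicator (fun _ => (1:ℝ≥0∞)) ω :=
      funext (hmin_pt n)
    rw [heq]
    exact Finset.measurable_sum _ (fun i _ => measurable_const.indicator (hBmeas i))
  have hmonoT : Monotone Tn := by
    intro a b hab ω
    exact ENat.toENNReal_le.mpr (min_le_min le_rfl (by exact_mod_cast hab))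
  have hET : ∫⁻ ω, (T1 p q h ω : ℝ≥0∞) ∂P
      = ⨆ n : ℕ, ∑ i ∈ Finset.range n, P (B i) := by
    rw [lintegral_congr hT1pt, lintegral_iSup hmeas_minT hmonoT]
    exact iSup_congr hminT
  -- upper bound
  have hEupper : ∫⁻ ω, (T1 p q h ω : ℝ≥0∞) ∂P ≤ ENNReal.ofReal ((h + C) / D) := by
    rw [hET]
    refine iSup_le fun n => ?_
    have hfin : (∑ i ∈ Finset.range n, P (B i)) ≠ ⊤ :=
      (ENNReal.sum_lt_top.mpr fun i _ => measure_lt_top P _).ne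
    rw [← ENNReal.ofReal_toReal hfin]
    refine ENNReal.ofReal_le_ofReal ?_
    rw [ENNReal.toReal_sum (fun i _ => (measure_ne_top P _))]
    exact hEn_le n
  have hEfin : ∫⁻ ω, (T1 p q h ω : ℝ≥0∞) ∂P ≠ ⊤ :=
    (lt_of_le_of_lt hEupper ENNReal.ofReal_lt_top).ne
  -- measurability of the coerced T1
  have hmeasT : Measurable (fun ω => (T1 p q h ω : ℝ≥0∞)) := by
    have heq : (fun ω => (T1 p q h ω : ℝ≥0∞)) = fun ω => ⨆ n : ℕ, Tn n ω := funext hT1pt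
    rw [heq]
    exact Measurable.iSup hmeas_minT
  -- a.s. finiteness
  have hfinae : ∀ᵐ ω ∂P, T1 p q h ω ≠ ⊤ := by
    filter_upwards [ae_lt_top hmeasT hEfin] with ω hω
    intro hcon
    rw [hcon] at hω
    simp at hω
  refine ⟨hfinae, ?_, hEupper⟩
  -- lower bound
  have htendE : Tendsto (fun n => ∑ i ∈ Finset.range n, (P (B i)).toReal) atTop
      (𝓝 ((∫⁻ ω, (T1 p q h ω : ℝ≥0∞) ∂P).toReal)) := by
    have h1 : Tendsto (fun n => ∑ i ∈ Finset.range n, P (B i)) atTop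
        (𝓝 (∫⁻ ω, (T1 p q h ω : ℝ≥0∞) ∂P)) := by
      rw [hET]
      exact tendsto_atTop_iSup (fun a b hab =>
        Finset.sum_le_sum_of_subset (Finset.range_subset_range.mpr hab))
    have h2 := (ENNReal.tendsto_toReal hEfin).comp h1
    refine h2.congr fun n => ?_
    simp only [Function.comp_apply]
    rw [ENNReal.toReal_sum (fun i _ => measure_ne_top P _)]
  set f : (ℕ → X) → ℝ := fun ω => ∑ i ∈ Finset.range ((T1 p q h ω).toNat), Z i ω with hfdef
  have hFn_eq_f : ∀ ω, T1 p q h ω ≠ ⊤ → ∀ n, (T1 p q h ω).toNat ≤ n → Fn n ω = f ω := by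
    intro ω hω n hn
    obtain ⟨m, hm⟩ := enat_exists_coe hω
    rw [hFn_filter, hfilter_coe n m ω hm]
    simp only [hfdef]
    rw [hm]
    have hm' : (((m : ℕ∞)).toNat) = m := by simp
    rw [hm']
    rw [hm, hm'] at hn
    rw [min_eq_left hn]
  have hglim : ∀ᵐ ω ∂P, Tendsto (fun n => Fn n ω) atTop (𝓝 (f ω)) := by
    filter_upwards [hfinae] with ω hω
    refine Tendsto.congr' ?_ tendsto_const_nhds
    filter_upwards [eventually_ge_atTop ((T1 p q h ω).toNat)] with n hn
    exact (hFn_eq_f ω hω n hn).symm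
  have hbound : ∀ (n : ℕ), ∀ᵐ ω ∂P, ‖Fn n ω‖ ≤ K * ((T1 p q h ω : ℝ≥0∞)).toReal := by
    intro n
    filter_upwards [hfinae] with ω hω
    obtain ⟨m, hm⟩ := enat_exists_coe hω
    rw [hFn_filter, hfilter_coe n m ω hm, hm]
    calc ‖∑ i ∈ Finset.range (min m n), Z i ω‖
        ≤ ∑ i ∈ Finset.range (min m n), ‖Z i ω‖ := norm_sum_le _ _
      _ ≤ ∑ _i ∈ Finset.range (min m n), K := Finset.sum_le_sum fun i _ => by
          simpa [Real.norm_eq_abs] using hK (ω i)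
      _ = ((min m n : ℕ) : ℝ) * K := by simp [Finset.sum_const, nsmul_eq_mul]
      _ ≤ (m : ℝ) * K := by
          have hc : ((min m n : ℕ) : ℝ) ≤ (m : ℝ) := by exact_mod_cast min_le_left m n
          exact mul_le_mul_of_nonneg_right hc hK0
      _ = K * (((m : ℕ∞) : ℝ≥0∞)).toReal := by
          rw [ENat.toENNReal_coe]
          simp [mul_comm]
  have hgint : Integrable (fun ω => K * ((T1 p q h ω : ℝ≥0∞)).toReal) P :=
    (integrable_toReal_of_lintegral_ne_top hmeasT.aemeasurable hEfin).const_mul K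
  have hDCT : Tendsto (fun n => ∫ ω, Fn n ω ∂P) atTop (𝓝 (∫ ω, f ω ∂P)) :=
    tendsto_integral_of_dominated_convergence _ (fun n => (hFint n).aestronglyMeasurable)
      hgint hbound hglim
  have h2' : Tendsto (fun n => ∫ ω, Fn n ω ∂P) atTop
      (𝓝 (D * (∫⁻ ω, (T1 p q h ω : ℝ≥0∞) ∂P).toReal)) := by
    have h3 := htendE.const_mul D
    refine h3.congr fun n => ?_
    rw [hIF n]
  have hfE : ∫ ω, f ω ∂P = D * (∫⁻ ω, (T1 p q h ω : ℝ≥0∞) ∂P).toReal :=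
    tendsto_nhds_unique hDCT h2'
  have hfint : Integrable f P := by
    refine Integrable.mono' hgint
      (aestronglyMeasurable_of_tendsto_ae atTop
        (fun n => (hFint n).aestronglyMeasurable) hglim) ?_
    filter_upwards [hfinae, ae_all_iff.mpr hbound] with ω hω hball
    have hh' := hFn_eq_f ω hω ((T1 p q h ω).toNat) le_rfl
    rw [← hh']
    exact hball _
  have hf_ge : ∀ᵐ ω ∂P, h ≤ f ω := by
    filter_upwards [hfinae, hGae] with ω hω hG'
    obtain ⟨m, hm⟩ := enat_exists_coe hω
    obtain ⟨hm1, hhm⟩ := T1_attained p q h ω hm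
    rw [hSum ω hG' m] at hhm
    simp only [hfdef]
    rw [hm]
    have hm' : (((m : ℕ∞)).toNat) = m := by simp
    rw [hm']
    exact EReal.coe_le_coe_iff.mp hhm
  have hintlow : h ≤ ∫ ω, f ω ∂P := by
    have h3 := integral_mono_ae (integrable_const h) hfint hf_ge
    simpa using h3
  rw [hfE] at hintlow
  refine ENNReal.ofReal_le_of_le_toReal ?_
  rw [div_le_iff₀ hDpos]
  linarith [hintlow]

end QCPD
end
end

section
/- Lower bound on the mean false alarm time of CUSUM: Assume supp q ⊆ supp p and h ≥ 0. Then under P_∞ (all X_i i.i.d. with law p), the CUSUM stopping time with threshold h satisfies E_∞[T*] ≥ e^{h} (as an inequality in the extended reals). -/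
open MeasureTheory ProbabilityTheory Real Filter
open scoped ENNReal NNReal

noncomputable section

namespace QCPD

variable {X : Type*}

/-- `T_j` (here `j : ℕ` represents the 1-indexed start `j+1`, so all starts
`j ≥ 1` are covered): the first time `n ≥ j+1` such that
`∑_{i=j+1}^n log (q (X_i) / p (X_i)) ≥ h`, and `∞` if there is no such `n`. -/
def Tj (p q : X → ℝ) (h : ℝ) (j : ℕ) (ω : ℕ → X) : ℕ∞ :=
  sInf ((↑) '' {n : ℕ | j + 1 ≤ n ∧ (h : EReal) ≤ ∑ i ∈ Finset.Ico j n, llr p q (ω i)})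

/-- The CUSUM stopping time `T* = inf_{j ≥ 1} T_j` with threshold `h`. -/
def Tstar (p q : X → ℝ) (h : ℝ) (ω : ℕ → X) : ℕ∞ := ⨅ j : ℕ, Tj p q h j ω

set_option linter.unusedSectionVars false

set_option linter.unusedVariables false


/-- Likelihood ratio, `ℝ≥0∞`-valued. -/
def LR (p q : X → ℝ) (x : X) : ℝ≥0∞ := ENNReal.ofReal (q x) / ENNReal.ofReal (p x)

lemma LR_ne_top {p q : X → ℝ} (hq : ∀ x, 0 ≤ q x) (hsupp : ∀ x, 0 < q x → 0 < p x) (x : X) :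
    LR p q x ≠ ⊤ := by
  rcases lt_or_eq_of_le (hq x) with hx | hx
  · have hpx : 0 < p x := hsupp x hx
    simp [LR, ENNReal.div_eq_top, ENNReal.ofReal_eq_zero, not_le.mpr hpx, ENNReal.ofReal_ne_top]
  · simp [LR, ← hx]

lemma log_prod (s : Finset ℕ) (f : ℕ → ℝ≥0∞) :
    ENNReal.log (∏ i ∈ s, f i) = ∑ i ∈ s, ENNReal.log (f i) := by
  classical
  induction s using Finset.induction_on with
  | empty => simp
  | insert _ _ hx ih =>
    rw [Finset.prod_insert hx, Finset.sum_insert hx, ENNReal.log_mul_add, ih]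

/-- Partial product of likelihood ratios over `[j, m)`. -/
def W (p q : X → ℝ) (j m : ℕ) (ω : ℕ → X) : ℝ≥0∞ := ∏ i ∈ Finset.Ico j m, LR p q (ω i)

lemma cond_iff (p q : X → ℝ) (h : ℝ) (j m : ℕ) (ω : ℕ → X) :
    ((h : EReal) ≤ ∑ i ∈ Finset.Ico j m, llr p q (ω i)) ↔
      ENNReal.ofReal (Real.exp h) ≤ W p q j m ω := by
  have : ∑ i ∈ Finset.Ico j m, llr p q (ω i) = ENNReal.log (W p q j m ω) := by
    rw [W, log_prod]; rfl
  rw [this, ← ENNReal.log_le_log_iff, ENNReal.log_ofReal_of_pos (Real.exp_pos h), Real.log_exp]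

/-- The alarm has been raised by time `n`. -/
def alarm (p q : X → ℝ) (h : ℝ) (n : ℕ) (ω : ℕ → X) : Prop :=
  ∃ m ≤ n, ∃ j < m, ENNReal.ofReal (Real.exp h) ≤ W p q j m ω

lemma alarm_mono {p q : X → ℝ} {h : ℝ} {n n' : ℕ} (hnn : n ≤ n') {ω : ℕ → X}
    (ha : alarm p q h n ω) : alarm p q h n' ω := by
  obtain ⟨m, hm, j, hj, hw⟩ := ha
  exact ⟨m, hm.trans hnn, j, hj, hw⟩

lemma Tstar_le_iff (p q : X → ℝ) (h : ℝ) (n : ℕ) (ω : ℕ → X) :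
    Tstar p q h ω ≤ n ↔ alarm p q h n ω := by
  constructor
  · intro hle
    by_contra hna
    have : ((n : ℕ∞) + 1) ≤ Tstar p q h ω := by
      refine le_iInf fun j => ?_
      unfold Tj
      refine le_sInf ?_
      rintro b ⟨m, ⟨hjm, hcond⟩, rfl⟩
      have hmn : n < m := by
        by_contra hmn
        exact hna ⟨m, not_lt.mp hmn, j, hjm, (cond_iff p q h j m ω).mp hcond⟩
      exact_mod_cast Nat.succ_le_of_lt hmn
    have h2 : (n : ℕ∞) < (n : ℕ∞) + 1 := by
      exact_mod_cast Nat.lt_succ_self n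
    exact absurd (le_trans this hle) (not_le.mpr h2)
  · rintro ⟨m, hm, j, hj, hw⟩
    have h1 : Tj p q h j ω ≤ m := by
      unfold Tj
      apply sInf_le
      exact ⟨m, ⟨hj, (cond_iff p q h j m ω).mpr hw⟩, rfl⟩
    calc Tstar p q h ω ≤ Tj p q h j ω := iInf_le _ j
    _ ≤ (m : ℕ∞) := h1
    _ ≤ (n : ℕ∞) := by exact_mod_cast hm

/-- Cylinder set: first `n` coordinates agree with `v`. -/
def cyl (v : ℕ → X) (n : ℕ) : Set (ℕ → X) := {ω | ∀ i < n, ω i = v i}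

section Meas
variable [Fintype X] [MeasurableSpace X] [DiscreteMeasurableSpace X]

lemma pmfMeasure_singleton (p : X → ℝ) (x : X) :
    pmfMeasure p {x} = ENNReal.ofReal (p x) := by
  classical
  rw [pmfMeasure, Measure.finset_sum_apply]
  have : ∀ y : X, (ENNReal.ofReal (p y) • Measure.dirac y) {x}
      = if y = x then ENNReal.ofReal (p y) else 0 := by
    intro y
    rw [Measure.smul_apply, Measure.dirac_apply' _ (measurableSet_singleton x)]
    by_cases hxy : y = x <;> simp [Set.indicator_apply, hxy]
  simp only [this]
  simp

lemma cyl_eq (v : ℕ → X) (n : ℕ) :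
    cyl v n = ⋂ i ∈ Finset.range n, (fun ω : ℕ → X => ω i) ⁻¹' {v i} := by
  ext ω; simp [cyl]

lemma cyl_measurableSet (v : ℕ → X) (n : ℕ) : MeasurableSet (cyl v n) := by
  rw [cyl_eq]
  exact Finset.measurableSet_biInter _ fun i _ =>
    (measurable_pi_apply i) (measurableSet_singleton (v i))

variable {Pinf : Measure (ℕ → X)} {p : X → ℝ}

lemma cyl_prob (hPinf : HasLaw Pinf (fun _ => p)) (v : ℕ → X) (n : ℕ) :
    Pinf (cyl v n) = ∏ i ∈ Finset.range n, ENNReal.ofReal (p (v i)) := by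
  have hkey := hPinf.1.measure_inter_preimage_eq_mul (Finset.range n)
    (sets := fun i => ({v i} : Set X)) (fun i _ => measurableSet_singleton _)
  rw [cyl_eq, hkey]
  refine Finset.prod_congr rfl fun i _ => ?_
  rw [← Measure.map_apply (measurable_pi_apply i) (measurableSet_singleton (v i)),
    hPinf.2 i, pmfMeasure_singleton]

/-- `g` depends only on the first `n` coordinates. -/
def DOn (n : ℕ) (g : (ℕ → X) → ℝ≥0∞) : Prop :=
  ∀ ω ω' : ℕ → X, (∀ i < n, ω i = ω' i) → g ω = g ω'

variable [Nonempty X]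

/-- Extend a finite word to an infinite one. -/
def ext (n : ℕ) (v : Fin n → X) : ℕ → X :=
  fun i => if h : i < n then v ⟨i, h⟩ else Classical.arbitrary X

lemma mem_cyl_ext {n : ℕ} {v : Fin n → X} {ω : ℕ → X} :
    ω ∈ cyl (ext n v) n ↔ (fun i : Fin n => ω i) = v := by
  constructor
  · intro hmem
    funext i
    have := hmem i.1 i.2
    rwa [ext, dif_pos i.2] at this
  · intro hproj i hi
    rw [ext, dif_pos hi]
    exact congrFun hproj ⟨i, hi⟩

lemma lintegral_depOn [IsProbabilityMeasure Pinf] (hPinf : HasLaw Pinf (fun _ => p))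
    {n : ℕ} {g : (ℕ → X) → ℝ≥0∞} (hg : DOn n g) :
    ∫⁻ ω, g ω ∂Pinf = ∑ v : Fin n → X, Pinf (cyl (ext n v) n) * g (ext n v) := by
  classical
  have hrep : ∀ ω, g ω
      = ∑ v : Fin n → X, Set.indicator (cyl (ext n v) n) (fun _ => g (ext n v)) ω := by
    intro ω
    have : ∀ v : Fin n → X, Set.indicator (cyl (ext n v) n) (fun _ => g (ext n v)) ω
        = if (fun i : Fin n => ω i) = v then g (ext n v) else 0 := by
      intro v
      rw [Set.indicator_apply]
      by_cases hv : (fun i : Fin n => ω i) = v <;> simp [mem_cyl_ext, hv]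
    simp only [this]
    rw [Finset.sum_ite_eq Finset.univ (fun i : Fin n => ω i)
      (fun v => g (ext n v)), if_pos (Finset.mem_univ _)]
    refine (hg _ ω fun i hi => ?_).symm
    rw [ext, dif_pos hi]
  calc ∫⁻ ω, g ω ∂Pinf
      = ∫⁻ ω, ∑ v : Fin n → X,
          Set.indicator (cyl (ext n v) n) (fun _ => g (ext n v)) ω ∂Pinf := by
        exact lintegral_congr hrep
    _ = ∑ v : Fin n → X, ∫⁻ ω,
          Set.indicator (cyl (ext n v) n) (fun _ => g (ext n v)) ω ∂Pinf := by
        refine lintegral_finset_sum _ fun v _ => ?_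
        exact (measurable_const.indicator (cyl_measurableSet _ _))
    _ = ∑ v : Fin n → X, Pinf (cyl (ext n v) n) * g (ext n v) := by
        refine Finset.sum_congr rfl fun v _ => ?_
        rw [lintegral_indicator_const (cyl_measurableSet _ _), mul_comm]


end Meas

section Meas2
variable [Fintype X] [MeasurableSpace X] [DiscreteMeasurableSpace X] [Nonempty X]
variable {Pinf : Measure (ℕ → X)} {p q : X → ℝ}
/-- expectation of the likelihood ratio is 1 -/
lemma sum_p_LR (hp : ∀ x, 0 ≤ p x) (hq : (∀ x, 0 ≤ q x) ∧ ∑ x, q x = 1)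
    (hsupp : ∀ x, 0 < q x → 0 < p x) :
    ∑ x : X, ENNReal.ofReal (p x) * LR p q x = 1 := by
  have hterm : ∀ x : X, ENNReal.ofReal (p x) * LR p q x = ENNReal.ofReal (q x) := by
    intro x
    rcases lt_or_eq_of_le (hq.1 x) with hx | hx
    · have hpx : 0 < p x := hsupp x hx
      rw [LR, ENNReal.mul_div_cancel (by simp [ENNReal.ofReal_eq_zero, not_le.mpr hpx])
        ENNReal.ofReal_ne_top]
    · rcases eq_or_lt_of_le (hp x) with hpx | hpx
      · simp [LR, ← hx, ← hpx]
      · simp [LR, ← hx]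
  rw [Finset.sum_congr rfl fun x _ => hterm x, ← ENNReal.ofReal_sum_of_nonneg (fun x _ => hq.1 x),
    hq.2, ENNReal.ofReal_one]

lemma ext_snoc_agree (n : ℕ) (v : Fin n → X) (x : X) (i : ℕ) (hi : i < n) :
    ext (n + 1) (Fin.snoc v x) i = ext n v i := by
  rw [ext, ext, dif_pos hi, dif_pos (Nat.lt_succ_of_lt hi)]
  simp [Fin.snoc, hi]

lemma ext_snoc_last (n : ℕ) (v : Fin n → X) (x : X) :
    ext (n + 1) (Fin.snoc v x) n = x := by
  rw [ext, dif_pos (Nat.lt_succ_self n)]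
  simp [Fin.snoc]

lemma factor_step [IsProbabilityMeasure Pinf]
    (hcyl : ∀ (v : ℕ → X) (n : ℕ),
      Pinf (cyl v n) = ∏ i ∈ Finset.range n, ENNReal.ofReal (p (v i)))
    (hdep : ∀ {n : ℕ} {g : (ℕ → X) → ℝ≥0∞}, DOn n g →
      ∫⁻ ω, g ω ∂Pinf = ∑ v : Fin n → X, Pinf (cyl (ext n v) n) * g (ext n v))
    (hLR1 : ∑ x : X, ENNReal.ofReal (p x) * LR p q x = 1)
    {n : ℕ} {g : (ℕ → X) → ℝ≥0∞} (hg : DOn n g) :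
    ∫⁻ ω, g ω * LR p q (ω n) ∂Pinf = ∫⁻ ω, g ω ∂Pinf := by
  classical
  have hg' : DOn (n + 1) (fun ω => g ω * LR p q (ω n)) := by
    intro ω ω' hagree
    dsimp only
    rw [hg ω ω' (fun i hi => hagree i (Nat.lt_succ_of_lt hi)), hagree n (Nat.lt_succ_self n)]
  rw [hdep hg', hdep hg]
  have hterm : ∀ (x : X) (v : Fin n → X),
      Pinf (cyl (ext (n+1) (Fin.snoc v x)) (n+1))
        * (g (ext (n+1) (Fin.snoc v x)) * LR p q (ext (n+1) (Fin.snoc v x) n))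
      = (ENNReal.ofReal (p x) * LR p q x) * (Pinf (cyl (ext n v) n) * g (ext n v)) := by
    intro x v
    have h1 : Pinf (cyl (ext (n+1) (Fin.snoc v x)) (n+1))
        = Pinf (cyl (ext n v) n) * ENNReal.ofReal (p x) := by
      rw [hcyl, hcyl, Finset.prod_range_succ, ext_snoc_last]
      congr 1
      exact Finset.prod_congr rfl fun i hi =>
        congrArg _ (congrArg p (ext_snoc_agree n v x i (Finset.mem_range.mp hi)))
    have h2 : g (ext (n+1) (Fin.snoc v x)) = g (ext n v) :=
      hg _ _ fun i hi => ext_snoc_agree n v x i hi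
    rw [h1, h2, ext_snoc_last]
    ring
  calc ∑ w : Fin (n+1) → X, Pinf (cyl (ext (n+1) w) (n+1))
          * ((fun ω => g ω * LR p q (ω n)) (ext (n+1) w))
      = ∑ pr : X × (Fin n → X), Pinf (cyl (ext (n+1) (Fin.snoc pr.2 pr.1)) (n+1))
          * (g (ext (n+1) (Fin.snoc pr.2 pr.1))
            * LR p q (ext (n+1) (Fin.snoc pr.2 pr.1) n)) := by
        exact (Fintype.sum_equiv (Fin.snocEquiv (fun _ : Fin (n+1) => X)) _ _
          (fun pr => rfl)).symm
    _ = ∑ x : X, ∑ v : Fin n → X,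
        (ENNReal.ofReal (p x) * LR p q x) * (Pinf (cyl (ext n v) n) * g (ext n v)) := by
        rw [Fintype.sum_prod_type]
        exact Finset.sum_congr rfl fun x _ => Finset.sum_congr rfl fun v _ => hterm x v
    _ = (∑ x : X, ENNReal.ofReal (p x) * LR p q x)
          * ∑ v : Fin n → X, Pinf (cyl (ext n v) n) * g (ext n v) := by
        rw [Finset.sum_mul]
        exact Finset.sum_congr rfl fun x _ => (Finset.mul_sum _ _ _).symm
    _ = ∑ v : Fin n → X, Pinf (cyl (ext n v) n) * g (ext n v) := by rw [hLR1, one_mul]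


end Meas2
open scoped Classical in
/-- Stopped Shiryaev–Roberts process `R_{T* ∧ n}`. -/
def GG (p q : X → ℝ) (h : ℝ) : ℕ → (ℕ → X) → ℝ≥0∞
  | 0 => fun _ => 0
  | n+1 => fun ω =>
      if alarm p q h n ω then GG p q h n ω else (GG p q h n ω + 1) * LR p q (ω n)

open scoped Classical in
/-- Stopped time counter `T* ∧ n`. -/
def KK (p q : X → ℝ) (h : ℝ) : ℕ → (ℕ → X) → ℝ≥0∞
  | 0 => fun _ => 0
  | n+1 => fun ω => if alarm p q h n ω then KK p q h n ω else KK p q h n ω + 1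

/-- Unstopped Shiryaev–Roberts process. -/
def RR (p q : X → ℝ) : ℕ → (ℕ → X) → ℝ≥0∞
  | 0 => fun _ => 0
  | n+1 => fun ω => (RR p q n ω + 1) * LR p q (ω n)

lemma W_le_RR (p q : X → ℝ) (ω : ℕ → X) :
    ∀ n, ∀ j < n, W p q j n ω ≤ RR p q n ω := by
  intro n
  induction n with
  | zero => intro j hj; exact absurd hj (Nat.not_lt_zero j)
  | succ m ih =>
    intro j hj
    have hjm : j ≤ m := Nat.lt_succ_iff.mp hj
    have hW : W p q j (m+1) ω = W p q j m ω * LR p q (ω m) := by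
      rw [W, W, Finset.prod_Ico_succ_top hjm]
    have hle : W p q j m ω ≤ RR p q m ω + 1 := by
      rcases eq_or_lt_of_le hjm with hEq | hlt
      · rw [W, hEq, Finset.Ico_self, Finset.prod_empty]
        exact le_add_self
      · exact (ih j hlt).trans le_self_add
    rw [hW]
    exact mul_le_mul_left hle (LR p q (ω m))

lemma GG_eq_RR {p q : X → ℝ} {h : ℝ} {ω : ℕ → X} :
    ∀ n, (∀ k < n, ¬ alarm p q h k ω) → GG p q h n ω = RR p q n ω := by
  intro n
  induction n with
  | zero => intro _; rfl
  | succ m ih =>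
    intro hna
    simp only [GG, RR]
    rw [if_neg (hna m (Nat.lt_succ_self m)), ih fun k hk => hna k (Nat.lt_succ_of_lt hk)]

lemma GG_freeze {p q : X → ℝ} {h : ℝ} {ω : ℕ → X} {t : ℕ} (ht : alarm p q h t ω) :
    ∀ n, t ≤ n → GG p q h n ω = GG p q h t ω := by
  intro n
  induction n with
  | zero => intro hn; rw [Nat.le_zero.mp hn]
  | succ m ih =>
    intro hn
    rcases Nat.le_add_one_iff.mp hn with htm | hEq
    · simp only [GG]
      rw [if_pos (alarm_mono htm ht), ih htm]
    · rw [hEq]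

lemma alarm_ge {p q : X → ℝ} {h : ℝ} {n : ℕ} {ω : ℕ → X} (ha : alarm p q h n ω) :
    ENNReal.ofReal (Real.exp h) ≤ GG p q h n ω := by
  classical
  have hex : ∃ k, alarm p q h k ω := ⟨n, ha⟩
  set t := Nat.find hex with hts
  have htal : alarm p q h t ω := Nat.find_spec hex
  have htmin : ∀ k < t, ¬ alarm p q h k ω := fun k hk => Nat.find_min hex hk
  have htn : t ≤ n := Nat.find_le ha
  obtain ⟨m, hmt, j, hjm, hw⟩ := id htal
  have hmal : alarm p q h m ω := ⟨m, le_refl m, j, hjm, hw⟩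
  have htm : t ≤ m := Nat.find_le hmal
  have hmEq : m = t := le_antisymm hmt htm
  rw [GG_freeze htal n htn, GG_eq_RR t htmin]
  rw [hmEq] at hw hjm
  exact hw.trans (W_le_RR p q ω t j hjm)

lemma KK_le_n {p q : X → ℝ} {h : ℝ} {ω : ℕ → X} : ∀ n, KK p q h n ω ≤ (n : ℝ≥0∞) := by
  intro n
  induction n with
  | zero => exact zero_le
  | succ m ih =>
    simp only [KK]
    split_ifs
    · exact ih.trans (Nat.cast_le.mpr (Nat.le_succ m))
    · push_cast
      exact add_le_add_left ih 1

/-! ### KK is dominated by Tstar -/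

lemma KK_le_Tstar {p q : X → ℝ} {h : ℝ} {ω : ℕ → X} :
    ∀ n, KK p q h n ω ≤ ((Tstar p q h ω : ℕ∞) : ℝ≥0∞) := by
  intro n
  induction n with
  | zero => exact zero_le
  | succ m ih =>
    simp only [KK]
    split_ifs with hal
    · exact ih
    · have hT : ¬ (Tstar p q h ω ≤ (m : ℕ∞)) := fun hle =>
        hal ((Tstar_le_iff p q h m ω).mp hle)
      rcases eq_or_ne (Tstar p q h ω) ⊤ with htop | htop
      · rw [htop]
        exact le_top.trans_eq (by simp)
      · obtain ⟨b, hb⟩ := WithTop.ne_top_iff_exists.mp htop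
        have hmb : m < b := by
          by_contra hbm
          apply hT
          rw [← hb]
          exact Nat.cast_le.mpr (not_lt.mp hbm)
        calc KK p q h m ω + 1 ≤ (m : ℝ≥0∞) + 1 := add_le_add_left (KK_le_n m) 1
          _ ≤ (b : ℝ≥0∞) := by exact_mod_cast Nat.succ_le_of_lt hmb
          _ = ((Tstar p q h ω : ℕ∞) : ℝ≥0∞) := by
              rw [← hb]; exact (ENat.toENNReal_coe b).symm

/-! ### Measurability and locality -/

section MeasGG

variable [Fintype X] [Nonempty X] [MeasurableSpace X] [DiscreteMeasurableSpace X]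

lemma measurable_W (p q : X → ℝ) (j m : ℕ) : Measurable (W p q j m) := by
  apply Finset.measurable_prod
  intro i _
  exact (measurable_of_countable (LR p q)).comp (measurable_pi_apply i)

lemma measurableSet_alarm (p q : X → ℝ) (h : ℝ) (n : ℕ) :
    MeasurableSet {ω : ℕ → X | alarm p q h n ω} := by
  have : {ω : ℕ → X | alarm p q h n ω}
      = ⋃ (m : ℕ) (_ : m ≤ n) (j : ℕ) (_ : j < m),
          {ω : ℕ → X | ENNReal.ofReal (Real.exp h) ≤ W p q j m ω} := by
    ext ω; simp [alarm]
  rw [this]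
  refine MeasurableSet.iUnion fun m => MeasurableSet.iUnion fun _ =>
    MeasurableSet.iUnion fun j => MeasurableSet.iUnion fun _ => ?_
  exact measurableSet_le measurable_const (measurable_W p q j m)

lemma measurable_GG (p q : X → ℝ) (h : ℝ) : ∀ n, Measurable (GG p q h n) := by
  intro n
  induction n with
  | zero => exact measurable_const
  | succ m ih =>
    simp only [GG]
    exact Measurable.ite (measurableSet_alarm p q h m) ih
      ((ih.add measurable_const).mul
        ((measurable_of_countable (LR p q)).comp (measurable_pi_apply m)))

lemma measurable_KK (p q : X → ℝ) (h : ℝ) : ∀ n, Measurable (KK p q h n) := by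
  intro n
  induction n with
  | zero => exact measurable_const
  | succ m ih =>
    simp only [KK]
    exact Measurable.ite (measurableSet_alarm p q h m) ih (ih.add measurable_const)

lemma alarm_depOn {p q : X → ℝ} {h : ℝ} {n : ℕ} {ω ω' : ℕ → X}
    (hagree : ∀ i < n, ω i = ω' i) : alarm p q h n ω ↔ alarm p q h n ω' := by
  have hW : ∀ j m : ℕ, m ≤ n → W p q j m ω = W p q j m ω' := by
    intro j m hmn
    refine Finset.prod_congr rfl fun i hi => ?_
    rw [hagree i (lt_of_lt_of_le (Finset.mem_Ico.mp hi).2 hmn)]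
  constructor
  · rintro ⟨m, hm, j, hj, hw⟩
    exact ⟨m, hm, j, hj, (hW j m hm) ▸ hw⟩
  · rintro ⟨m, hm, j, hj, hw⟩
    exact ⟨m, hm, j, hj, (hW j m hm).symm ▸ hw⟩

lemma GG_depOn (p q : X → ℝ) (h : ℝ) : ∀ n, DOn n (GG p q h n) := by
  intro n
  induction n with
  | zero => intro ω ω' _; rfl
  | succ m ih =>
    intro ω ω' hagree
    have hag : ∀ i < m, ω i = ω' i := fun i hi => hagree i (Nat.lt_succ_of_lt hi)
    simp only [GG]
    rw [ih ω ω' hag, hagree m (Nat.lt_succ_self m)]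
    by_cases hal : alarm p q h m ω
    · rw [if_pos hal, if_pos ((alarm_depOn hag).mp hal)]
    · rw [if_neg hal, if_neg (fun hc => hal ((alarm_depOn hag).mpr hc))]

lemma KK_depOn (p q : X → ℝ) (h : ℝ) : ∀ n, DOn n (KK p q h n) := by
  intro n
  induction n with
  | zero => intro ω ω' _; rfl
  | succ m ih =>
    intro ω ω' hagree
    have hag : ∀ i < m, ω i = ω' i := fun i hi => hagree i (Nat.lt_succ_of_lt hi)
    simp only [KK]
    rw [ih ω ω' hag]
    by_cases hal : alarm p q h m ω
    · rw [if_pos hal, if_pos ((alarm_depOn hag).mp hal)]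
    · rw [if_neg hal, if_neg (fun hc => hal ((alarm_depOn hag).mpr hc))]

end MeasGG

/-- **Lower bound on the mean false alarm time of CUSUM.** If `supp q ⊆ supp p`
and `h ≥ 0`, then under the i.i.d.-`p` measure `P_∞`, the CUSUM stopping time
with threshold `h` satisfies `E_∞[T*] ≥ e^h` in the extended reals. -/
theorem cusum_false_alarm_lower_bound
    [Fintype X] [Nonempty X] [MeasurableSpace X] [DiscreteMeasurableSpace X]
    (p q : X → ℝ) (hp : IsPMF p) (hq : IsPMF q)
    (hsupp : ∀ x, 0 < q x → 0 < p x)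
    (h : ℝ) (hh : 0 ≤ h)
    (Pinf : Measure (ℕ → X)) [IsProbabilityMeasure Pinf]
    (hPinf : HasLaw Pinf (fun _ => p)) :
    ENNReal.ofReal (Real.exp h) ≤ ∫⁻ ω, (Tstar p q h ω : ℝ≥0∞) ∂Pinf := by
  classical
  set eh := ENNReal.ofReal (Real.exp h) with heh
  have hLR1 : ∑ x : X, ENNReal.ofReal (p x) * LR p q x = 1 := sum_p_LR hp.1 hq hsupp
  have hfac : ∀ {n : ℕ} {g : (ℕ → X) → ℝ≥0∞}, DOn n g →
      ∫⁻ ω, g ω * LR p q (ω n) ∂Pinf = ∫⁻ ω, g ω ∂Pinf :=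
    fun {n g} hg => factor_step (cyl_prob hPinf) (fun {n g} hg => lintegral_depOn hPinf hg)
      hLR1 hg
  -- key martingale identity for the stopped processes
  have hkey : ∀ n : ℕ, ∫⁻ ω, GG p q h n ω ∂Pinf = ∫⁻ ω, KK p q h n ω ∂Pinf := by
    intro n
    induction n with
    | zero => rfl
    | succ m ih =>
      have hGGm := measurable_GG p q h m
      have hKKm := measurable_KK p q h m
      have halm := measurableSet_alarm p q h m
      have hmeasA : Measurable fun ω => if alarm p q h m ω then GG p q h m ω else 0 :=
        Measurable.ite halm hGGm measurable_const
      have hstep1 : ∫⁻ ω, GG p q h (m+1) ω ∂Pinf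
          = ∫⁻ ω, (if alarm p q h m ω then GG p q h m ω else 0) ∂Pinf
            + ∫⁻ ω, (if alarm p q h m ω then 0 else GG p q h m ω + 1) * LR p q (ω m) ∂Pinf := by
        rw [← lintegral_add_left hmeasA]
        refine lintegral_congr fun ω => ?_
        simp only [GG]
        by_cases hal : alarm p q h m ω <;> simp [hal]
      have hDb : DOn m (fun ω => if alarm p q h m ω then 0 else GG p q h m ω + 1) := by
        intro ω ω' hag
        dsimp only
        rw [GG_depOn p q h m ω ω' hag]
        by_cases hal : alarm p q h m ω
        · rw [if_pos hal, if_pos ((alarm_depOn hag).mp hal)]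
        · rw [if_neg hal, if_neg (fun hc => hal ((alarm_depOn hag).mpr hc))]
      have hstep2 : ∫⁻ ω, (if alarm p q h m ω then 0 else GG p q h m ω + 1) * LR p q (ω m) ∂Pinf
          = ∫⁻ ω, (if alarm p q h m ω then 0 else GG p q h m ω + 1) ∂Pinf := hfac hDb
      have hstep3 : ∫⁻ ω, (if alarm p q h m ω then GG p q h m ω else 0) ∂Pinf
            + ∫⁻ ω, (if alarm p q h m ω then 0 else GG p q h m ω + 1) ∂Pinf
          = ∫⁻ ω, GG p q h m ω ∂Pinf
            + ∫⁻ ω, (if alarm p q h m ω then 0 else 1 : ℝ≥0∞) ∂Pinf := by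
        rw [← lintegral_add_left hmeasA, ← lintegral_add_left hGGm]
        refine lintegral_congr fun ω => ?_
        by_cases hal : alarm p q h m ω <;> simp [hal, add_comm]
      have hstep4 : ∫⁻ ω, KK p q h (m+1) ω ∂Pinf
          = ∫⁻ ω, KK p q h m ω ∂Pinf
            + ∫⁻ ω, (if alarm p q h m ω then 0 else 1 : ℝ≥0∞) ∂Pinf := by
        rw [← lintegral_add_left hKKm]
        refine lintegral_congr fun ω => ?_
        simp only [KK]
        by_cases hal : alarm p q h m ω <;> simp [hal]
      rw [hstep1, hstep2, hstep3, hstep4, ih]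
  -- lower bound for each n
  have hlow : ∀ n : ℕ, eh * Pinf {ω | alarm p q h n ω}
      ≤ ∫⁻ ω, (Tstar p q h ω : ℝ≥0∞) ∂Pinf := by
    intro n
    have h1 : eh * Pinf {ω | alarm p q h n ω}
        = ∫⁻ ω, Set.indicator {ω : ℕ → X | alarm p q h n ω} (fun _ => eh) ω ∂Pinf := by
      rw [lintegral_indicator_const (measurableSet_alarm p q h n)]
    have h2 : ∫⁻ ω, Set.indicator {ω : ℕ → X | alarm p q h n ω} (fun _ => eh) ω ∂Pinf
        ≤ ∫⁻ ω, GG p q h n ω ∂Pinf := by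
      refine lintegral_mono fun ω => ?_
      rw [Set.indicator_apply]
      split_ifs with hal
      · exact alarm_ge hal
      · exact zero_le
    have h3 : ∫⁻ ω, KK p q h n ω ∂Pinf ≤ ∫⁻ ω, (Tstar p q h ω : ℝ≥0∞) ∂Pinf :=
      lintegral_mono fun ω => KK_le_Tstar n
    rw [h1]
    exact h2.trans ((hkey n).le.trans h3)
  set A := ⋃ n : ℕ, {ω : ℕ → X | alarm p q h n ω} with hA
  have hAmeas : MeasurableSet A := MeasurableSet.iUnion fun n => measurableSet_alarm p q h n
  have hTtop : ∀ ω : ℕ → X, ω ∉ A → Tstar p q h ω = ⊤ := by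
    intro ω hω
    by_contra hne
    obtain ⟨b, hb⟩ := WithTop.ne_top_iff_exists.mp hne
    refine hω (Set.mem_iUnion.mpr ⟨b, ?_⟩)
    exact (Tstar_le_iff p q h b ω).mp (le_of_eq hb.symm)
  by_cases hc : Pinf Aᶜ = 0
  · have hA1 : Pinf A = 1 := (prob_compl_eq_zero_iff hAmeas).mp hc
    have hsup : Pinf A = ⨆ n, Pinf {ω : ℕ → X | alarm p q h n ω} := by
      refine Directed.measure_iUnion ?_
      refine (Monotone.directed_le ?_)
      intro a b hab ω hωa
      exact alarm_mono hab hωa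
    calc eh = eh * Pinf A := by rw [hA1, mul_one]
      _ = ⨆ n, eh * Pinf {ω : ℕ → X | alarm p q h n ω} := by rw [hsup, ENNReal.mul_iSup]
      _ ≤ ∫⁻ ω, (Tstar p q h ω : ℝ≥0∞) ∂Pinf := iSup_le hlow
  · have hbig : (⊤ : ℝ≥0∞) ≤ ∫⁻ ω, (Tstar p q h ω : ℝ≥0∞) ∂Pinf := by
      have hind : ∫⁻ ω, Set.indicator Aᶜ (fun _ => (⊤ : ℝ≥0∞)) ω ∂Pinf
          ≤ ∫⁻ ω, (Tstar p q h ω : ℝ≥0∞) ∂Pinf := by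
        refine lintegral_mono fun ω => ?_
        rw [Set.indicator_apply]
        split_ifs with hω
        · rw [hTtop ω hω]
          simp
        · exact zero_le
      rw [lintegral_indicator_const hAmeas.compl, ENNReal.top_mul hc] at hind
      exact hind
    exact le_top.trans hbig

end QCPD
end
end
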